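/- Let (X,𝒳) be a measurable space, S a Polish space with Borel σ-field 𝒮, and let X⁰ : Ω⁰ → X, Y⁰ : Ω⁰ → S be random variables on a probability space (Ω⁰,ℱ⁰,P⁰). Then there exists a probability space (Ω,ℱ,P) carrying random variables X, Y, Z such that (X,Y) has the same distribution as (X⁰,Y⁰) and, conditionally on X, the variables Y and Z are independent and identically distributed. -/

import Mathlib

open MeasureTheory ProbabilityTheory

lemma map_proj_compProd {α β : Type*} [MeasurableSpace α] [MeasurableSpace β]
    (μ : Measure α) [IsProbabilityMeasure μ] (κ η : Kernel α β)
    [IsMarkovKernel κ] [IsMarkovKernel η] :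
    (μ ⊗ₘ (κ ×ₖ η)).map (fun p => (p.1, p.2.1)) = μ ⊗ₘ κ := by
  have hm : Measurable (fun p : α × β × β => (p.1, p.2.1)) :=
    measurable_fst.prodMk (measurable_snd.fst)
  refine ext_of_generate_finite _ generateFrom_prod.symm isPiSystem_prod (fun s hs => ?_) ?_
  · rcases hs with ⟨t, ht, u, hu, rfl⟩
    rw [Measure.map_apply hm (ht.prod hu)]
    have hpre : (fun p : α × β × β => (p.1, p.2.1)) ⁻¹' (t ×ˢ u) = t ×ˢ (u ×ˢ Set.univ) := by
      ext p; simp [and_assoc]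
    rw [hpre, Measure.compProd_apply_prod ht (hu.prod MeasurableSet.univ),
      Measure.compProd_apply_prod ht hu]
    refine setLIntegral_congr_fun ht (fun a _ => ?_)
    rw [Kernel.prod_apply, Measure.prod_prod, measure_univ, mul_one]
  · rw [Measure.map_apply hm MeasurableSet.univ]
    simp

/-- Given random variables `X⁰ : Ω⁰ → 𝕏` and `Y⁰ : Ω⁰ → S` (with `S` Polish)
on a probability space, there exists a probability space carrying random variables `X, Y, Z`
such that `(X,Y) ~ (X⁰,Y⁰)` and, conditionally on `X`, the variables `Y` and `Z` are i.i.d.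
(the conditional law of `(Y,Z)` given `X` is the product of two copies of one Markov kernel). -/
theorem stmt10 {Ω₀ : Type} [MeasurableSpace Ω₀] (P₀ : Measure Ω₀) [IsProbabilityMeasure P₀]
    {𝕏 : Type} [MeasurableSpace 𝕏]
    {S : Type} [MeasurableSpace S] [TopologicalSpace S] [PolishSpace S] [BorelSpace S]
    (X₀ : Ω₀ → 𝕏) (hX₀ : Measurable X₀) (Y₀ : Ω₀ → S) (hY₀ : Measurable Y₀) :
    ∃ (Ω : Type) (_ : MeasurableSpace Ω) (P : Measure Ω) (_ : IsProbabilityMeasure P)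
      (X : Ω → 𝕏) (Y Z : Ω → S),
      Measurable X ∧ Measurable Y ∧ Measurable Z ∧
      Measure.map (fun ω => (X ω, Y ω)) P = Measure.map (fun ω => (X₀ ω, Y₀ ω)) P₀ ∧
      ∃ (κ : ProbabilityTheory.Kernel 𝕏 S) (_ : IsMarkovKernel κ),
        Measure.map (fun ω => (X ω, (Y ω, Z ω))) P =
          Measure.compProd (Measure.map X₀ P₀) (κ ×ₖ κ) := by
  have hΩ₀ : Nonempty Ω₀ := by
    by_contra h
    rw [not_nonempty_iff] at h
    have := measure_univ (μ := P₀)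
    simp [Set.eq_empty_of_isEmpty (Set.univ : Set Ω₀)] at this
  have hS : Nonempty S := ⟨Y₀ hΩ₀.some⟩
  have hmap : IsProbabilityMeasure (P₀.map X₀) := Measure.isProbabilityMeasure_map hX₀.aemeasurable
  set κ := condDistrib Y₀ X₀ P₀ with hκdef
  have hκ : IsMarkovKernel κ := by infer_instance
  have key : P₀.map (fun a => (X₀ a, Y₀ a)) = (P₀.map X₀) ⊗ₘ κ := by
    rw [hκdef, condDistrib, ← Measure.fst_map_prodMk (X := X₀) hY₀,
      (P₀.map (fun a => (X₀ a, Y₀ a))).disintegrate]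
  refine ⟨𝕏 × S × S, inferInstance, (P₀.map X₀) ⊗ₘ (κ ×ₖ κ), ?_, Prod.fst,
    fun p => p.2.1, fun p => p.2.2, measurable_fst, measurable_snd.fst, measurable_snd.snd,
    ?_, κ, hκ, ?_⟩
  · infer_instance
  · rw [map_proj_compProd, key]
  · have : (fun ω : 𝕏 × S × S => (ω.1, (ω.2.1, ω.2.2))) = id := by
      funext p; simp
    rw [this, Measure.map_id]
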